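/- Let 1 ≤ k ≤ n-1. Define D(t) = (1/C(n-1,k-1)) * C(t+n-k, n-k) * (sum over j from 0 to k-1 of C(n-k-1+j, j) * C(t+j, j)) as a polynomial in t over the rationals, where C(t+a, a) = (t+1)(t+2)...(t+a)/a!. Then all coefficients of the polynomial D(t-1) are nonnegative. -/

import Mathlib

open Polynomial

/-- The polynomial binomial coefficient `C(t+a, a) = (t+1)(t+2)⋯(t+a)/a!`. -/
noncomputable def binomPoly (a : ℕ) : Polynomial ℚ :=
  (a.factorial : ℚ)⁻¹ • ((ascPochhammer ℚ a).comp (Polynomial.X + 1))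

/-- The Ehrhart polynomial of the minimal matroid `T_{k,n}`. -/
noncomputable def minD (n k : ℕ) : Polynomial ℚ :=
  (((n - 1).choose (k - 1) : ℚ))⁻¹ •
    (binomPoly (n - k) *
      ∑ j ∈ Finset.range k, ((n - k - 1 + j).choose j : ℚ) • binomPoly j)

def NNc (p : Polynomial ℚ) : Prop := ∀ m, 0 ≤ p.coeff m

lemma NNc.mul {p q : Polynomial ℚ} (hp : NNc p) (hq : NNc q) : NNc (p * q) := by
  intro m
  rw [Polynomial.coeff_mul]
  exact Finset.sum_nonneg fun x _ => mul_nonneg (hp x.1) (hq x.2)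

lemma NNc.smul {c : ℚ} (hc : 0 ≤ c) {p : Polynomial ℚ} (hp : NNc p) : NNc (c • p) := by
  intro m
  rw [Polynomial.coeff_smul, smul_eq_mul]
  exact mul_nonneg hc (hp m)

lemma NNc.sum {s : Finset ℕ} {f : ℕ → Polynomial ℚ} (h : ∀ j ∈ s, NNc (f j)) :
    NNc (∑ j ∈ s, f j) := by
  intro m
  rw [Polynomial.finset_sum_coeff]
  exact Finset.sum_nonneg fun j hj => h j hj m

lemma NNc.asc (a : ℕ) : NNc (ascPochhammer ℚ a) := by
  intro m
  rw [← ascPochhammer_map (algebraMap ℕ ℚ) a, Polynomial.coeff_map, eq_natCast]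
  exact Nat.cast_nonneg _

lemma binomPoly_comp (a : ℕ) :
    (binomPoly a).comp (Polynomial.X - 1) = (a.factorial : ℚ)⁻¹ • ascPochhammer ℚ a := by
  rw [binomPoly, Polynomial.smul_comp, Polynomial.comp_assoc]
  simp

lemma NNc_binomPoly_comp (a : ℕ) : NNc ((binomPoly a).comp (Polynomial.X - 1)) := by
  rw [binomPoly_comp]
  refine NNc.smul (by positivity) (NNc.asc a)

/-- All coefficients of `D(t-1)` are nonnegative. -/
theorem minD_shift_coeff_nonneg (n k : ℕ) (hk : 1 ≤ k) (hkn : k ≤ n - 1) :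
    ∀ m, 0 ≤ ((minD n k).comp (Polynomial.X - 1)).coeff m := by
  have : NNc ((minD n k).comp (Polynomial.X - 1)) := by
    rw [minD, Polynomial.smul_comp, Polynomial.mul_comp]
    refine NNc.smul (by positivity) (NNc.mul (NNc_binomPoly_comp _) ?_)
    rw [← Polynomial.coe_compRingHom_apply, map_sum]
    refine NNc.sum fun j _ => ?_
    rw [Polynomial.coe_compRingHom_apply, Polynomial.smul_comp]
    exact NNc.smul (by positivity) (NNc_binomPoly_comp j)
  exact this
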